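/- Let (M,d) be a metric space and X, Y ⊆ M. Assume there exists a ∈ (0,∞) such that for each ρ ∈ (0,a) and each x' ∈ X there exists x'' ∈ X with d(x',x'') = ρ. Let υ_Y ∈ (0,∞), β ∈ (0,1], s₂ ∈ [β,∞), s₃ ∈ (0,1], with s₂ − β < υ_Y and in addition s₃ ≥ β. Let ν be a measure on a σ-algebra of subsets of Y containing the Borel subsets of Y, with ν(B(x,r) ∩ Y) < ∞ for all x ∈ X and r > 0, and ν(Y) < ∞. Let Y be upper υ_Y-Ahlfors regular with respect to X and let Z ∈ 𝒦_{υ_Y,s₂,s₃}(X×Y). If there exists C > 0 such that for every g ∈ C^{0,β}(X∪Y) the function Q[Z,g,1] is bounded and β-Hölder continuous on X with sup-norm plus β-Hölder seminorm at most C·|g|_β, then sup_{x∈X} sup_{r>0} |∫_{Y\B(x,r)} Z(x,y) dν(y)| < ∞. -/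

import Mathlib

open MeasureTheory Metric Set
open scoped ENNReal

noncomputable section

variable {M : Type*} [MetricSpace M] [MeasurableSpace M] [BorelSpace M]

/-- `Y` is upper `υ`-Ahlfors regular with respect to `X`:
there exist `r₀ ∈ (0,∞]` and `c > 0` with `ν (B(x,r) ∩ Y) ≤ c rᵘ` for `x ∈ X`, `0 < r < r₀`. -/
def UpperAhlforsRegular (ν : Measure M) (X Y : Set M) (υ : ℝ) : Prop :=
  ∃ c : ℝ, 0 < c ∧ ∃ r₀ : ℝ≥0∞, 0 < r₀ ∧
    ∀ x ∈ X, ∀ r : ℝ, 0 < r → ENNReal.ofReal r < r₀ →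
      ν (ball x r ∩ Y) ≤ ENNReal.ofReal (c * r ^ υ)

/-- `Y` is strongly upper `υ`-Ahlfors regular with respect to `X`. -/
def StronglyUpperAhlforsRegular (ν : Measure M) (X Y : Set M) (υ : ℝ) : Prop :=
  ∃ c : ℝ, 0 < c ∧ ∃ r₀ : ℝ≥0∞, 0 < r₀ ∧
    ∀ x ∈ X, ∀ r₁ r₂ : ℝ, 0 ≤ r₁ → r₁ < r₂ → ENNReal.ofReal r₂ < r₀ →
      ν ((ball x r₂ \ ball x r₁) ∩ Y) ≤ ENNReal.ofReal (c * (r₂ ^ υ - r₁ ^ υ))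

/-- the set of values `d(x,y)^{s₁} |K(x,y)|`, `x ∈ X`, `y ∈ Y`, `x ≠ y`. -/
def kernelSet₁ (X Y : Set M) (s₁ : ℝ) (K : M → M → ℂ) : Set ℝ :=
  {t | ∃ x ∈ X, ∃ y ∈ Y, x ≠ y ∧ t = dist x y ^ s₁ * ‖K x y‖}

/-- the set of values `(d(x',y)^{s₂}/d(x',x'')^{s₃}) |K(x',y) - K(x'',y)|`,
`x', x'' ∈ X`, `x' ≠ x''`, `y ∈ Y \ B(x', 2 d(x',x''))`. -/
def kernelSet₂ (X Y : Set M) (s₂ s₃ : ℝ) (K : M → M → ℂ) : Set ℝ :=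
  {t | ∃ x' ∈ X, ∃ x'' ∈ X, x' ≠ x'' ∧ ∃ y ∈ Y \ ball x' (2 * dist x' x''),
        t = dist x' y ^ s₂ / dist x' x'' ^ s₃ * ‖K x' y - K x'' y‖}

/-- membership in the kernel class `𝒦_{s₁,s₂,s₃}(X×Y)`: continuity off the diagonal
together with finiteness of the two suprema defining the norm. -/
def MemK (X Y : Set M) (s₁ s₂ s₃ : ℝ) (K : M → M → ℂ) : Prop :=
  ContinuousOn (fun p : M × M => K p.1 p.2) ((X ×ˢ Y) \ {p : M × M | p.1 = p.2}) ∧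
  BddAbove (kernelSet₁ X Y s₁ K) ∧ BddAbove (kernelSet₂ X Y s₂ s₃ K)

/-- the norm `‖K‖` of the class `𝒦_{s₁,s₂,s₃}(X×Y)`. -/
def kNorm (X Y : Set M) (s₁ s₂ s₃ : ℝ) (K : M → M → ℂ) : ℝ :=
  sSup (kernelSet₁ X Y s₁ K) + sSup (kernelSet₂ X Y s₂ s₃ K)

/-- the set of values `|∫_{Y \ B(x,r)} K(x,y) dν(y)|`, `x ∈ X`, `r > 0`
(the maximal function values). -/
def maxFunSet (ν : Measure M) (X Y : Set M) (K : M → M → ℂ) : Set ℝ :=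
  {t | ∃ x ∈ X, ∃ r : ℝ, 0 < r ∧ t = ‖∫ y in Y \ ball x r, K x y ∂ν‖}

/-- membership in the kernel class `𝒦♯_{s₁,s₂,s₃}(X×Y)`. -/
def MemKSharp (ν : Measure M) (X Y : Set M) (s₁ s₂ s₃ : ℝ) (K : M → M → ℂ) : Prop :=
  MemK X Y s₁ s₂ s₃ K ∧
  (∀ x ∈ X, ∀ r : ℝ, 0 < r → IntegrableOn (K x) (Y \ ball x r) ν) ∧
  BddAbove (maxFunSet ν X Y K)

/-- the norm of the class `𝒦♯_{s₁,s₂,s₃}(X×Y)`. -/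
def kNormSharp (ν : Measure M) (X Y : Set M) (s₁ s₂ s₃ : ℝ) (K : M → M → ℂ) : ℝ :=
  kNorm X Y s₁ s₂ s₃ K + sSup (maxFunSet ν X Y K)

/-- the set of Hölder quotients `|g x - g y| / d(x,y)^β`, `x, y ∈ D`, `x ≠ y`. -/
def holderSet (D : Set M) (β : ℝ) (g : M → ℂ) : Set ℝ :=
  {t | ∃ x ∈ D, ∃ y ∈ D, x ≠ y ∧ t = ‖g x - g y‖ / dist x y ^ β}

/-- `g` is `β`-Hölder continuous on `D`. -/
def IsHolderOn (D : Set M) (β : ℝ) (g : M → ℂ) : Prop :=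
  BddAbove (holderSet D β g)

/-- the `β`-Hölder seminorm `|g|_β` of `g` on `D`. -/
def holderSemi (D : Set M) (β : ℝ) (g : M → ℂ) : ℝ :=
  sSup (holderSet D β g)

def supValSet (D : Set M) (f : M → ℂ) : Set ℝ := {t | ∃ x ∈ D, t = ‖f x‖}

/-- `f` is bounded on `D`. -/
def BoundedOnSet (D : Set M) (f : M → ℂ) : Prop := BddAbove (supValSet D f)

/-- the sup-norm of `f` on `D`. -/
def supNormOn (D : Set M) (f : M → ℂ) : ℝ := sSup (supValSet D f)

/-- `Q[Z,g,1](x) = ∫_Y Z(x,y) (g(x) - g(y)) dν(y)`. -/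
def Qop (ν : Measure M) (Y : Set M) (Z : M → M → ℂ) (g : M → ℂ) (x : M) : ℂ :=
  ∫ y in Y, Z x y * (g x - g y) ∂ν

/-- the modulus of continuity `ω_θ`. -/
def omegaMod (θ r : ℝ) : ℝ :=
  if r ≤ 0 then 0
  else if r ≤ Real.exp (-1 / θ) then r ^ θ * |Real.log r|
  else Real.exp (-1 / θ) ^ θ * |Real.log (Real.exp (-1 / θ))|


set_option linter.unusedSectionVars false
set_option maxHeartbeats 1000000

open Filter

lemma aux_min_lip {a b c : ℝ} : |min a c - min b c| ≤ |a - b| := by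
  rcases le_total a c with h1 | h1 <;> rcases le_total b c with h2 | h2 <;>
    simp only [min_eq_left, min_eq_right, h1, h2] <;>
    [skip; skip; skip; simp] <;>
    (rw [abs_le]; constructor <;> cases' abs_cases (a - b) with h h <;> linarith)

lemma aux_rpow_sub {β : ℝ} (hβ0 : 0 < β) (hβ1 : β ≤ 1) {a b : ℝ} (ha : 0 ≤ a) (hb : 0 ≤ b) :
    |a ^ β - b ^ β| ≤ |a - b| ^ β := by
  wlog hab : b ≤ a generalizing a b
  · rw [abs_sub_comm, abs_sub_comm a b]; exact this hb ha (le_of_not_ge hab)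
  have h1 : a ^ β ≤ b ^ β + (a - b) ^ β := by
    have h := NNReal.rpow_add_le_add_rpow (Real.toNNReal b) (Real.toNNReal (a - b)) hβ0.le hβ1
    have hadd : Real.toNNReal b + Real.toNNReal (a - b) = Real.toNNReal a := by
      rw [← Real.toNNReal_add hb (by linarith)]; norm_num
    rw [hadd] at h
    have h2 := NNReal.coe_le_coe.mpr h
    push_cast [NNReal.coe_rpow] at h2
    rwa [Real.coe_toNNReal _ ha, Real.coe_toNNReal _ hb,
      Real.coe_toNNReal _ (by linarith : (0:ℝ) ≤ a - b)] at h2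
  have h2 : b ^ β ≤ a ^ β := Real.rpow_le_rpow hb hab hβ0.le
  rw [abs_of_nonneg (by linarith), abs_of_nonneg (by linarith)]
  linarith


lemma aux_null {ν : Measure M} {Y : Set M} {x : M} {c υ δ : ℝ} (hυ : 0 < υ)
    (hδ : 0 < δ)
    (h : ∀ ρ : ℝ, 0 < ρ → ρ ≤ δ → ν (ball x ρ ∩ Y) ≤ ENNReal.ofReal (c * ρ ^ υ)) :
    ν ({x} ∩ Y) = 0 := by
  have hb : ∀ n : ℕ, ν ({x} ∩ Y) ≤ ENNReal.ofReal (c * δ ^ υ * ((1/2:ℝ) ^ υ) ^ n) := by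
    intro n
    have hρ : 0 < δ * (1/2:ℝ) ^ n := by positivity
    have hρδ : δ * (1/2:ℝ) ^ n ≤ δ := by
      nlinarith [pow_le_one₀ (by norm_num : (0:ℝ) ≤ 1/2) (by norm_num : (1/2:ℝ) ≤ 1) (n := n)]
    have hsub : {x} ∩ Y ⊆ ball x (δ * (1/2:ℝ) ^ n) ∩ Y := by
      rintro y ⟨hy1, hy2⟩
      rcases hy1 with rfl
      exact ⟨mem_ball_self hρ, hy2⟩
    refine le_trans (measure_mono hsub) (le_trans (h _ hρ hρδ) (le_of_eq ?_))
    congr 1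
    rw [Real.mul_rpow hδ.le (by positivity), ← Real.rpow_natCast ((1/2:ℝ)) n,
      ← Real.rpow_natCast ((1/2:ℝ) ^ υ) n, ← Real.rpow_mul (by norm_num),
      ← Real.rpow_mul (by norm_num), mul_comm (n:ℝ) υ]
    ring
  have hq1 : (1/2:ℝ) ^ υ < 1 := Real.rpow_lt_one (by norm_num) (by norm_num) hυ
  have hlim : Tendsto (fun n : ℕ => ENNReal.ofReal (c * δ ^ υ * ((1/2:ℝ) ^ υ) ^ n)) atTop (nhds 0) := by
    have h1 : Tendsto (fun n : ℕ => c * δ ^ υ * ((1/2:ℝ) ^ υ) ^ n) atTop (nhds 0) := by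
      have := (tendsto_pow_atTop_nhds_zero_of_lt_one (by positivity) hq1).const_mul (c * δ ^ υ)
      simpa using this
    have := (ENNReal.continuous_ofReal.tendsto 0).comp h1
    simpa [Function.comp_def] using this
  exact le_antisymm (ge_of_tendsto' hlim hb) zero_le

lemma aux_meas {ν : Measure M} {X Y : Set M} (hYm : MeasurableSet Y) {Z : M → M → ℂ}
    (hZc : ContinuousOn (fun p : M × M => Z p.1 p.2) ((X ×ˢ Y) \ {p : M × M | p.1 = p.2}))
    {x : M} (hx : x ∈ X) (hnull : ν ({x} ∩ Y) = 0) :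
    AEStronglyMeasurable (fun y => Z x y) (ν.restrict Y) := by
  have hmaps : MapsTo (fun y => (x, y)) (Y \ {x}) ((X ×ˢ Y) \ {p : M × M | p.1 = p.2}) := by
    rintro y ⟨hy1, hy2⟩
    exact ⟨⟨hx, hy1⟩, fun h => hy2 (by simpa using h.symm)⟩
  have hcont : ContinuousOn (fun y => Z x y) (Y \ {x}) := by
    intro y hy
    exact (hZc _ (hmaps hy)).comp ((continuous_const.prodMk continuous_id).continuousWithinAt) hmaps
  have h1 : AEStronglyMeasurable (fun y => Z x y) (ν.restrict (Y \ {x})) :=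
    hcont.aestronglyMeasurable (hYm.diff (measurableSet_singleton x))
  have h2 : ν.restrict Y = ν.restrict (Y \ {x}) := by
    refine Measure.restrict_congr_set (MeasureTheory.ae_eq_set.mpr ⟨?_, ?_⟩)
    · refine measure_mono_null (fun y hy => ?_) hnull
      rcases hy with ⟨hy1, hy2⟩
      simp only [mem_diff, not_and, not_not] at hy2
      exact ⟨hy2 hy1, hy1⟩
    · simp [diff_diff_right]
  rw [h2]; exact h1


lemma aux_dyadic {ν : Measure M} {Y : Set M} (hYm : MeasurableSet Y) {x : M} {c υ t R : ℝ}
    (hc : 0 ≤ c) (hυ : 0 < υ) (ht : 0 < t) (hR : 0 < R)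
    (hAh : ∀ ρ : ℝ, 0 < ρ → ρ ≤ R → ν (ball x ρ ∩ Y) ≤ ENNReal.ofReal (c * ρ ^ υ)) :
    ∫⁻ y in ball x R ∩ Y, ENNReal.ofReal (dist x y ^ (t - υ)) ∂ν ≤
      ENNReal.ofReal ((2:ℝ) ^ υ * c * (1 - (1/2:ℝ) ^ t)⁻¹ * R ^ t) := by
  classical
  set f : M → ℝ≥0∞ := fun y => ENNReal.ofReal (dist x y ^ (t - υ)) with hf
  set rk : ℕ → ℝ := fun k => R * (1/2:ℝ) ^ k with hrk
  have hrkpos : ∀ k, 0 < rk k := fun k => by positivity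
  have hrkle : ∀ k, rk k ≤ R := by
    intro k
    have h := pow_le_one₀ (by norm_num : (0:ℝ) ≤ 1/2) (by norm_num : (1/2:ℝ) ≤ 1) (n := k)
    show R * (1/2:ℝ) ^ k ≤ R
    nlinarith
  set A : ℕ → Set M := fun k => (ball x (rk k) \ ball x (rk (k + 1))) ∩ Y with hA
  have hnull : ν ({x} ∩ Y) = 0 := aux_null hυ hR hAh
  -- step 1 : replace domain by domain minus {x}
  have hstep1 : ∫⁻ y in ball x R ∩ Y, f y ∂ν = ∫⁻ y in (ball x R ∩ Y) \ {x}, f y ∂ν := by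
    refine setLIntegral_congr (MeasureTheory.ae_eq_set.mpr ⟨?_, ?_⟩)
    · refine measure_mono_null (fun y hy => ?_) hnull
      rcases hy with ⟨⟨hy1, hy2⟩, hy3⟩
      simp only [mem_diff, not_and, not_not] at hy3
      exact ⟨hy3 ⟨hy1, hy2⟩, hy2⟩
    · simp [diff_diff_right]
  -- step 2 : covering by annuli
  have hcover : (ball x R ∩ Y) \ {x} ⊆ ⋃ k, A k := by
    rintro y ⟨⟨hyb, hyY⟩, hyx⟩
    have hyx' : y ≠ x := by simpa using hyx
    have hd : 0 < dist y x := dist_pos.mpr hyx'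
    have hdR : dist y x < R := mem_ball.mp hyb
    have hex : ∃ n : ℕ, rk n ≤ dist y x := by
      obtain ⟨n, hn⟩ := exists_pow_lt_of_lt_one (div_pos hd hR) (by norm_num : (1/2:ℝ) < 1)
      refine ⟨n, ?_⟩
      have h := (lt_div_iff₀ hR).mp hn
      show R * (1/2:ℝ) ^ n ≤ dist y x
      nlinarith
    set n := Nat.find hex with hn
    have hn1 : rk n ≤ dist y x := Nat.find_spec hex
    have hn0 : n ≠ 0 := by
      intro h
      rw [h] at hn1
      simp only [hrk, pow_zero, mul_one] at hn1
      linarith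
    obtain ⟨k, hk⟩ : ∃ k, n = k + 1 := ⟨n - 1, (Nat.succ_pred_eq_of_pos (Nat.pos_of_ne_zero hn0)).symm⟩
    have hklt : ¬ rk k ≤ dist y x := Nat.find_min hex (by omega)
    refine mem_iUnion.mpr ⟨k, ⟨⟨mem_ball.mpr (lt_of_not_ge hklt), fun hmem => ?_⟩, hyY⟩⟩
    exact absurd (mem_ball.mp hmem) (not_lt.mpr (hk ▸ hn1))
  -- step 3: per-annulus bound
  have hperann : ∀ k, ∫⁻ y in A k, f y ∂ν ≤
      ENNReal.ofReal ((2:ℝ) ^ υ * c * R ^ t) * (ENNReal.ofReal ((1/2:ℝ) ^ t)) ^ k := by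
    intro k
    have hAm : MeasurableSet (A k) := ((measurableSet_ball.diff measurableSet_ball).inter hYm)
    have hbd : ∀ y ∈ A k, f y ≤ ENNReal.ofReal ((2:ℝ) ^ υ * rk k ^ (t - υ)) := by
      rintro y ⟨⟨hy1, hy2⟩, hy3⟩
      have hlt : dist y x < rk k := mem_ball.mp hy1
      have hge : rk (k + 1) ≤ dist y x := by
        simpa using fun h => hy2 (mem_ball.mpr h)
      have hdy : 0 < dist y x := lt_of_lt_of_le (hrkpos (k+1)) hge
      have h2υ : (1:ℝ) ≤ 2 ^ υ :=
        Real.one_le_rpow (by norm_num) hυ.le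
      have hreal : dist y x ^ (t - υ) ≤ (2:ℝ) ^ υ * rk k ^ (t - υ) := by
        rcases le_or_gt 0 (t - υ) with hcase | hcase
        · have := Real.rpow_le_rpow hdy.le hlt.le hcase
          nlinarith [Real.rpow_nonneg (hrkpos k).le (t - υ)]
        · have h1 : dist y x ^ (t - υ) ≤ rk (k+1) ^ (t - υ) :=
            Real.rpow_le_rpow_of_nonpos (hrkpos (k+1)) hge hcase.le
          have h2 : rk (k+1) = rk k * (1/2:ℝ) := by rw [hrk]; ring
          have h3 : rk (k+1) ^ (t - υ) = rk k ^ (t - υ) * (1/2:ℝ) ^ (t - υ) := by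
            rw [h2, Real.mul_rpow (hrkpos k).le (by norm_num)]
          have h4 : (1/2:ℝ) ^ (t - υ) ≤ 2 ^ υ := by
            rw [one_div, ← Real.rpow_neg_one (2:ℝ), ← Real.rpow_mul (by norm_num)]
            exact Real.rpow_le_rpow_of_exponent_le (by norm_num) (by linarith)
          have h5 : 0 ≤ rk k ^ (t - υ) := Real.rpow_nonneg (hrkpos k).le _
          nlinarith
      show ENNReal.ofReal (dist x y ^ (t - υ)) ≤ ENNReal.ofReal ((2:ℝ) ^ υ * rk k ^ (t - υ))
      rw [dist_comm x y]
      exact ENNReal.ofReal_le_ofReal hreal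
    have hmeasA : ν (A k) ≤ ENNReal.ofReal (c * rk k ^ υ) :=
      le_trans (measure_mono (inter_subset_inter_left _ diff_subset)) (hAh _ (hrkpos k) (hrkle k))
    calc ∫⁻ y in A k, f y ∂ν
        ≤ ∫⁻ _ in A k, ENNReal.ofReal ((2:ℝ) ^ υ * rk k ^ (t - υ)) ∂ν :=
          setLIntegral_mono' hAm hbd
      _ = ENNReal.ofReal ((2:ℝ) ^ υ * rk k ^ (t - υ)) * ν (A k) := setLIntegral_const _ _
      _ ≤ ENNReal.ofReal ((2:ℝ) ^ υ * rk k ^ (t - υ)) * ENNReal.ofReal (c * rk k ^ υ) :=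
          mul_le_mul' le_rfl hmeasA
      _ = ENNReal.ofReal (((2:ℝ) ^ υ * rk k ^ (t - υ)) * (c * rk k ^ υ)) := by
          rw [← ENNReal.ofReal_mul (by positivity)]
      _ = ENNReal.ofReal ((2:ℝ) ^ υ * c * R ^ t) * (ENNReal.ofReal ((1/2:ℝ) ^ t)) ^ k := by
          rw [← ENNReal.ofReal_pow (by positivity), ← ENNReal.ofReal_mul (by positivity)]
          congr 1
          have h1 : rk k ^ (t - υ) * rk k ^ υ = rk k ^ t := by
            rw [← Real.rpow_add (hrkpos k)]; ring_nf
          have h2 : ((1/2:ℝ) ^ k) ^ t = ((1/2:ℝ) ^ t) ^ k := by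
            rw [← Real.rpow_natCast ((1/2:ℝ)) k, ← Real.rpow_natCast ((1/2:ℝ) ^ t) k,
              ← Real.rpow_mul (by norm_num), ← Real.rpow_mul (by norm_num), mul_comm]
          have h3 : rk k ^ t = R ^ t * ((1/2:ℝ) ^ t) ^ k := by
            rw [hrk]
            show (R * (1/2:ℝ) ^ k) ^ t = _
            rw [Real.mul_rpow hR.le (by positivity), h2]
          have h4 : (2:ℝ) ^ υ * rk k ^ (t - υ) * (c * rk k ^ υ)
              = (2:ℝ) ^ υ * c * (rk k ^ (t - υ) * rk k ^ υ) := by ring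
          rw [h4, h1, h3]; ring
  -- assemble
  rw [hstep1]
  calc ∫⁻ y in (ball x R ∩ Y) \ {x}, f y ∂ν
      ≤ ∫⁻ y in ⋃ k, A k, f y ∂ν := lintegral_mono_set hcover
    _ ≤ ∑' k, ∫⁻ y in A k, f y ∂ν := lintegral_iUnion_le _ _
    _ ≤ ∑' k, ENNReal.ofReal ((2:ℝ) ^ υ * c * R ^ t) * (ENNReal.ofReal ((1/2:ℝ) ^ t)) ^ k :=
        ENNReal.tsum_le_tsum hperann
    _ = ENNReal.ofReal ((2:ℝ) ^ υ * c * R ^ t) * (1 - ENNReal.ofReal ((1/2:ℝ) ^ t))⁻¹ := by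
        rw [ENNReal.tsum_mul_left, ENNReal.tsum_geometric]
    _ ≤ ENNReal.ofReal ((2:ℝ) ^ υ * c * (1 - (1/2:ℝ) ^ t)⁻¹ * R ^ t) := by
        have hq1 : (1/2:ℝ) ^ t < 1 := Real.rpow_lt_one (by norm_num) (by norm_num) ht
        have hq0 : (0:ℝ) ≤ (1/2:ℝ) ^ t := Real.rpow_nonneg (by norm_num) t
        have : (1 : ℝ≥0∞) - ENNReal.ofReal ((1/2:ℝ) ^ t) = ENNReal.ofReal (1 - (1/2:ℝ) ^ t) := by
          rw [ENNReal.ofReal_sub _ hq0, ENNReal.ofReal_one]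
        rw [this, ← ENNReal.ofReal_inv_of_pos (by linarith), ← ENNReal.ofReal_mul (by positivity)]
        exact le_of_eq (by ring)


lemma aux_int_bound {ν : Measure M} {S : Set M} (hS : MeasurableSet S) {F : M → ℂ}
    {G : M → ℝ≥0∞} {D : ℝ} (hD : 0 ≤ D)
    (hF : AEStronglyMeasurable F (ν.restrict S))
    (hbound : ∀ y ∈ S, (‖F y‖₊ : ℝ≥0∞) ≤ G y)
    (hG : ∫⁻ y in S, G y ∂ν ≤ ENNReal.ofReal D) :
    IntegrableOn F S ν ∧ ‖∫ y in S, F y ∂ν‖ ≤ D := by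
  have hae : ∀ᵐ y ∂(ν.restrict S), (‖F y‖₊ : ℝ≥0∞) ≤ G y :=
    (ae_restrict_iff' hS).mpr (ae_of_all _ hbound)
  have hlt : ∫⁻ y in S, (‖F y‖₊ : ℝ≥0∞) ∂ν ≤ ENNReal.ofReal D :=
    le_trans (lintegral_mono_ae hae) hG
  have hint : IntegrableOn F S ν :=
    ⟨hF, lt_of_le_of_lt hlt ENNReal.ofReal_lt_top⟩
  refine ⟨hint, ?_⟩
  have h1 := norm_integral_le_lintegral_norm (μ := ν.restrict S) F
  have h2 : ∫⁻ y in S, ENNReal.ofReal ‖F y‖ ∂ν = ∫⁻ y in S, (‖F y‖₊ : ℝ≥0∞) ∂ν := by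
    simp only [← enorm_eq_nnnorm, ofReal_norm]
  rw [h2] at h1
  refine le_trans h1 ?_
  calc (∫⁻ y in S, (‖F y‖₊ : ℝ≥0∞) ∂ν).toReal
      ≤ (ENNReal.ofReal D).toReal := ENNReal.toReal_mono ENNReal.ofReal_ne_top hlt
    _ = D := ENNReal.toReal_ofReal hD

theorem stmt_9 {M : Type*} [MetricSpace M] [MeasurableSpace M] [BorelSpace M]
    (X Y : Set M) (ν : Measure M) (hYm : MeasurableSet Y)
    (υ β s₂ s₃ : ℝ)
    (hυ : 0 < υ) (hβ0 : 0 < β) (hβ1 : β ≤ 1) (hs₂ : β ≤ s₂) (hs₃0 : 0 < s₃) (hs₃1 : s₃ ≤ 1)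
    (hball : ∀ x ∈ X, ∀ r : ℝ, 0 < r → ν (ball x r ∩ Y) < ⊤)
    (hYfin : ν Y < ⊤)
    (ha : ∃ a : ℝ, 0 < a ∧ ∀ ρ : ℝ, 0 < ρ → ρ < a → ∀ x' ∈ X, ∃ x'' ∈ X, dist x' x'' = ρ)
    (h1 : s₂ - β < υ) (h2 : β ≤ s₃)
    (hreg : UpperAhlforsRegular ν X Y υ)
    (Z : M → M → ℂ) (hZ : MemK X Y υ s₂ s₃ Z)
    (hQ : ∃ C : ℝ, 0 < C ∧ ∀ g : M → ℂ, IsHolderOn (X ∪ Y) β g →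
      BoundedOnSet X (Qop ν Y Z g) ∧
      IsHolderOn X β (Qop ν Y Z g) ∧
      supNormOn X (Qop ν Y Z g) + holderSemi X β (Qop ν Y Z g) ≤
        C * holderSemi (X ∪ Y) β g) :
    BddAbove (maxFunSet ν X Y Z) := by

  classical
  rcases X.eq_empty_or_nonempty with rfl | ⟨x₀, hx₀⟩
  · refine ⟨0, ?_⟩
    rintro t ⟨x, hx, _⟩
    exact absurd hx (notMem_empty x)
  -- kernel size bound
  obtain ⟨c₁', hc₁'⟩ := hZ.2.1
  set c₁ := max c₁' 0 with hc₁def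
  have hc₁0 : 0 ≤ c₁ := le_max_right _ _
  have hZbd : ∀ x ∈ X, ∀ y ∈ Y, x ≠ y → ‖Z x y‖ ≤ c₁ * dist x y ^ (-υ) := by
    intro x hx y hy hxy
    have h1 : dist x y ^ υ * ‖Z x y‖ ≤ c₁ :=
      le_trans (hc₁' ⟨x, hx, y, hy, hxy, rfl⟩) (le_max_left _ _)
    have hd : 0 < dist x y := dist_pos.mpr hxy
    have hdp : 0 < dist x y ^ υ := Real.rpow_pos_of_pos hd υ
    rw [Real.rpow_neg hd.le]
    calc ‖Z x y‖ = (dist x y ^ υ * ‖Z x y‖) * (dist x y ^ υ)⁻¹ := by field_simp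
      _ ≤ c₁ * (dist x y ^ υ)⁻¹ :=
          mul_le_mul_of_nonneg_right h1 (inv_nonneg.mpr hdp.le)
  obtain ⟨c, hc, r₀, hr₀, hAh⟩ := hreg
  obtain ⟨C, hC, hQall⟩ := hQ
  obtain ⟨a, ha0, hexist⟩ := ha
  obtain ⟨δ, hδ0, hδr₀⟩ : ∃ δ : ℝ, 0 < δ ∧ ENNReal.ofReal δ < r₀ := by
    rcases eq_or_ne r₀ ⊤ with h | h
    · exact ⟨1, one_pos, h ▸ ENNReal.ofReal_lt_top⟩
    · refine ⟨r₀.toReal / 2, half_pos (ENNReal.toReal_pos hr₀.ne' h), ?_⟩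
      calc ENNReal.ofReal (r₀.toReal / 2) < ENNReal.ofReal r₀.toReal := by
            rw [ENNReal.ofReal_lt_ofReal_iff (ENNReal.toReal_pos hr₀.ne' h)]
            linarith [ENNReal.toReal_pos hr₀.ne' h]
        _ = r₀ := ENNReal.ofReal_toReal h
  have hAh' : ∀ x ∈ X, ∀ ρ : ℝ, 0 < ρ → ρ ≤ δ → ν (ball x ρ ∩ Y) ≤ ENNReal.ofReal (c * ρ ^ υ) :=
    fun x hx ρ h1 h2 =>
      hAh x hx ρ h1 (lt_of_le_of_lt (ENNReal.ofReal_le_ofReal h2) hδr₀)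
  have hnull : ∀ x ∈ X, ν ({x} ∩ Y) = 0 := fun x hx => aux_null hυ hδ0 (hAh' x hx)
  have hmeas : ∀ x ∈ X, AEStronglyMeasurable (fun y => Z x y) (ν.restrict Y) :=
    fun x hx => aux_meas hYm hZ.1 hx (hnull x hx)
  set ρ₁ := min (a / 2) (δ / 4) with hρ₁def
  have hρ₁0 : 0 < ρ₁ := lt_min (by linarith) (by linarith)
  set K : ℝ := (2:ℝ) ^ υ * c * (1 - (1/2:ℝ) ^ β)⁻¹ with hKdef
  have hq1 : (1/2:ℝ) ^ β < 1 := Real.rpow_lt_one (by norm_num) (by norm_num) hβ0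
  have hK0 : 0 ≤ K := by
    have h1 : (0:ℝ) < (1 - (1/2:ℝ) ^ β)⁻¹ := inv_pos.mpr (by linarith)
    exact mul_nonneg (mul_nonneg (Real.rpow_nonneg (by norm_num) υ) hc.le) h1.le
  have hdyadic : ∀ x ∈ X, ∀ R : ℝ, 0 < R → R ≤ δ →
      ∫⁻ y in ball x R ∩ Y, ENNReal.ofReal (dist x y ^ (β - υ)) ∂ν ≤
        ENNReal.ofReal ((2:ℝ) ^ υ * c * (1 - (1/2:ℝ) ^ β)⁻¹ * R ^ β) :=
    fun x hx R hR hRδ =>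
      aux_dyadic hYm hc.le hυ hβ0 hR (fun ρ h1 h2 => hAh' x hx ρ h1 (h2.trans hRδ))
  -- integrability and bound on complements of balls
  have hcompl : ∀ x ∈ X, ∀ r : ℝ, 0 < r →
      IntegrableOn (fun y => Z x y) (Y \ ball x r) ν ∧
        ‖∫ y in Y \ ball x r, Z x y ∂ν‖ ≤ c₁ * r ^ (-υ) * (ν Y).toReal := by
    intro x hx r hr
    have hScm : MeasurableSet (Y \ ball x r) := hYm.diff measurableSet_ball
    refine aux_int_bound hScm
      (mul_nonneg (mul_nonneg hc₁0 (Real.rpow_nonneg hr.le _)) ENNReal.toReal_nonneg)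
      ((hmeas x hx).mono_measure (Measure.restrict_mono diff_subset le_rfl))
      (G := fun _ => ENNReal.ofReal (c₁ * r ^ (-υ))) ?_ ?_
    · rintro y ⟨hyY, hyb⟩
      have hle : r ≤ dist x y := by
        rw [dist_comm]; exact not_lt.mp (fun h => hyb (mem_ball.mpr h))
      have hxy : x ≠ y := by
        intro h; rw [h, dist_self] at hle; linarith
      rw [← enorm_eq_nnnorm, ← ofReal_norm]
      refine ENNReal.ofReal_le_ofReal ?_
      calc ‖Z x y‖ ≤ c₁ * dist x y ^ (-υ) := hZbd x hx y hyY hxy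
        _ ≤ c₁ * r ^ (-υ) :=
            mul_le_mul_of_nonneg_left
              (Real.rpow_le_rpow_of_nonpos hr hle (neg_nonpos.mpr hυ.le)) hc₁0
    · calc ∫⁻ _ in Y \ ball x r, ENNReal.ofReal (c₁ * r ^ (-υ)) ∂ν
          = ENNReal.ofReal (c₁ * r ^ (-υ)) * ν (Y \ ball x r) := setLIntegral_const _ _
        _ ≤ ENNReal.ofReal (c₁ * r ^ (-υ)) * ν Y := mul_le_mul' le_rfl (measure_mono diff_subset)
        _ = ENNReal.ofReal (c₁ * r ^ (-υ) * (ν Y).toReal) := by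
            rw [ENNReal.ofReal_mul (mul_nonneg hc₁0 (Real.rpow_nonneg hr.le _)),
              ENNReal.ofReal_toReal hYfin.ne]
  -- the key estimate for small radii
  have hsmall : ∀ x ∈ X, ∀ r : ℝ, 0 < r → r < ρ₁ →
      ‖∫ y in Y \ ball x r, Z x y ∂ν‖ ≤ C + c₁ * K + c₁ * (K * 2 ^ β) := by
    intro x hx r hr hrρ
    have hrδ : r ≤ δ := by
      have := min_le_right (a/2) (δ/4); rw [← hρ₁def] at this; linarith
    have h2rδ : 2 * r ≤ δ := by
      have := min_le_right (a/2) (δ/4); rw [← hρ₁def] at this; linarith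
    have hra : r < a := by
      have := min_le_left (a/2) (δ/4); rw [← hρ₁def] at this; linarith
    obtain ⟨x'', hx''X, hx''d⟩ := hexist r hr hra x hx
    have hxx : x ≠ x'' := by
      intro h; rw [h, dist_self] at hx''d; linarith
    -- the test function
    set g : M → ℂ := fun y => ((min (dist x y) r ^ β : ℝ) : ℂ) with hgdef
    have hgx : g x = 0 := by
      simp only [hgdef, dist_self, min_eq_left hr.le, Real.zero_rpow hβ0.ne', Complex.ofReal_zero]
    have hgx'' : g x'' = ((r ^ β : ℝ) : ℂ) := by
      simp only [hgdef, hx''d, min_self]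
    have hgout : ∀ y, y ∉ ball x r → g y = ((r ^ β : ℝ) : ℂ) := by
      intro y hy
      have h1 : r ≤ dist x y := by
        rw [dist_comm]; exact not_lt.mp (fun h => hy (mem_ball.mpr h))
      simp only [hgdef, min_eq_right h1]
    have hgc : Continuous g :=
      Complex.continuous_ofReal.comp
        (((continuous_const.dist continuous_id).min continuous_const).rpow_const
          (fun y => Or.inr hβ0.le))
    -- Hölder seminorm of g is at most 1
    have hglip : ∀ u v : M, ‖g u - g v‖ ≤ dist u v ^ β := by
      intro u v
      simp only [hgdef]
      rw [← Complex.ofReal_sub, Complex.norm_real, Real.norm_eq_abs]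
      have h1 : |min (dist x u) r - min (dist x v) r| ≤ |dist x u - dist x v| := aux_min_lip
      have h2 : |dist x u - dist x v| ≤ dist u v := by
        rw [dist_comm x u, dist_comm x v]; exact abs_dist_sub_le _ _ _
      calc |min (dist x u) r ^ β - min (dist x v) r ^ β|
          ≤ |min (dist x u) r - min (dist x v) r| ^ β :=
            aux_rpow_sub hβ0 hβ1 (le_min dist_nonneg hr.le) (le_min dist_nonneg hr.le)
        _ ≤ dist u v ^ β := Real.rpow_le_rpow (abs_nonneg _) (h1.trans h2) hβ0.le
    have hgH : IsHolderOn (X ∪ Y) β g ∧ holderSemi (X ∪ Y) β g ≤ 1 := by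
      have hub : ∀ s ∈ holderSet (X ∪ Y) β g, s ≤ 1 := by
        rintro s ⟨u, hu, v, hv, huv, rfl⟩
        rw [div_le_one (Real.rpow_pos_of_pos (dist_pos.mpr huv) β)]
        simpa using hglip u v
      exact ⟨⟨1, fun s hs => hub s hs⟩, Real.sSup_le hub one_pos.le⟩
    obtain ⟨hQb, hQH, hQn⟩ := hQall g hgH.1
    -- sets
    set S₂ := ball x r ∩ Y with hS₂def
    have hS₂m : MeasurableSet S₂ := measurableSet_ball.inter hYm
    have hScm : MeasurableSet (Y \ ball x r) := hYm.diff measurableSet_ball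
    have hYunion : S₂ ∪ (Y \ ball x r) = Y := by
      rw [hS₂def, inter_comm]; exact inter_union_diff Y (ball x r)
    have hdisj : Disjoint S₂ (Y \ ball x r) := by
      rw [disjoint_left]
      rintro y ⟨hy1, _⟩ ⟨_, hy2⟩
      exact hy2 hy1
    -- P2 : inner integral bound at x
    have hP2 : IntegrableOn (fun y => Z x y * g y) S₂ ν ∧
        ‖∫ y in S₂, Z x y * g y ∂ν‖ ≤ c₁ * (K * r ^ β) := by
      refine aux_int_bound hS₂m
        (mul_nonneg hc₁0 (mul_nonneg hK0 (Real.rpow_nonneg hr.le β)))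
        (((hmeas x hx).mono_measure (Measure.restrict_mono inter_subset_right le_rfl)).mul
          hgc.aestronglyMeasurable)
        (G := fun y => ENNReal.ofReal (c₁ * dist x y ^ (β - υ))) ?_ ?_
      · rintro y ⟨hyb, hyY⟩
        rw [← enorm_eq_nnnorm, ← ofReal_norm]
        refine ENNReal.ofReal_le_ofReal ?_
        rcases eq_or_ne x y with rfl | hxy
        · rw [hgx, mul_zero, norm_zero]
          exact mul_nonneg hc₁0 (Real.rpow_nonneg dist_nonneg _)
        · have hd : 0 < dist x y := dist_pos.mpr hxy
          have h2 : ‖g y‖ ≤ dist x y ^ β := by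
            simp only [hgdef]
            rw [Complex.norm_real, Real.norm_eq_abs,
              abs_of_nonneg (Real.rpow_nonneg (le_min dist_nonneg hr.le) β)]
            exact Real.rpow_le_rpow (le_min dist_nonneg hr.le) (min_le_left _ _) hβ0.le
          calc ‖Z x y * g y‖ ≤ (c₁ * dist x y ^ (-υ)) * (dist x y ^ β) := by
                rw [norm_mul]
                exact mul_le_mul (hZbd x hx y hyY hxy) h2 (norm_nonneg _)
                  (mul_nonneg hc₁0 (Real.rpow_nonneg dist_nonneg _))
            _ = c₁ * dist x y ^ (β - υ) := by
                rw [mul_assoc, ← Real.rpow_add hd]; ring_nf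
      · calc ∫⁻ y in S₂, ENNReal.ofReal (c₁ * dist x y ^ (β - υ)) ∂ν
            = ∫⁻ y in S₂, ENNReal.ofReal c₁ * ENNReal.ofReal (dist x y ^ (β - υ)) ∂ν := by
              congr 1; funext y; rw [← ENNReal.ofReal_mul hc₁0]
          _ = ENNReal.ofReal c₁ * ∫⁻ y in S₂, ENNReal.ofReal (dist x y ^ (β - υ)) ∂ν :=
              lintegral_const_mul' _ _ ENNReal.ofReal_ne_top
          _ ≤ ENNReal.ofReal c₁ *
              ENNReal.ofReal ((2:ℝ) ^ υ * c * (1 - (1/2:ℝ) ^ β)⁻¹ * r ^ β) :=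
              mul_le_mul' le_rfl (hdyadic x hx r hr hrδ)
          _ = ENNReal.ofReal (c₁ * (K * r ^ β)) := by
              rw [← ENNReal.ofReal_mul hc₁0]
    -- P3 : integral at x''
    have hzero : ∀ y ∈ Y \ ball x r, Z x'' y * (g x'' - g y) = 0 := by
      rintro y ⟨_, hy2⟩
      rw [hgout y hy2, hgx'', sub_self, mul_zero]
    have hP3 : IntegrableOn (fun y => Z x'' y * (g x'' - g y)) S₂ ν ∧
        ‖∫ y in S₂, Z x'' y * (g x'' - g y) ∂ν‖ ≤ c₁ * (K * (2 * r) ^ β) := by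
      refine aux_int_bound hS₂m
        (mul_nonneg hc₁0 (mul_nonneg hK0 (Real.rpow_nonneg (by linarith) β)))
        (((hmeas x'' hx''X).mono_measure
            (Measure.restrict_mono inter_subset_right le_rfl)).mul
          (continuous_const.sub hgc).aestronglyMeasurable)
        (G := fun y => ENNReal.ofReal (c₁ * dist x'' y ^ (β - υ))) ?_ ?_
      · rintro y ⟨hyb, hyY⟩
        rw [← enorm_eq_nnnorm, ← ofReal_norm]
        refine ENNReal.ofReal_le_ofReal ?_
        rcases eq_or_ne x'' y with rfl | hxy
        · rw [sub_self, mul_zero, norm_zero]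
          exact mul_nonneg hc₁0 (Real.rpow_nonneg dist_nonneg _)
        · have hd : 0 < dist x'' y := dist_pos.mpr hxy
          have h2 : ‖g x'' - g y‖ ≤ dist x'' y ^ β := by
            rw [hgx'']
            simp only [hgdef]
            rw [← Complex.ofReal_sub, Complex.norm_real, Real.norm_eq_abs]
            have hlip : |r - min (dist x y) r| ≤ dist x'' y := by
              calc |r - min (dist x y) r|
                  = |min (dist x x'') r - min (dist x y) r| := by rw [hx''d, min_self]
                _ ≤ |dist x x'' - dist x y| := aux_min_lip
                _ ≤ dist x'' y := by
                    rw [dist_comm x x'', dist_comm x y]; exact abs_dist_sub_le _ _ _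
            calc |r ^ β - min (dist x y) r ^ β|
                ≤ |r - min (dist x y) r| ^ β :=
                  aux_rpow_sub hβ0 hβ1 hr.le (le_min dist_nonneg hr.le)
              _ ≤ dist x'' y ^ β := Real.rpow_le_rpow (abs_nonneg _) hlip hβ0.le
          calc ‖Z x'' y * (g x'' - g y)‖ ≤ (c₁ * dist x'' y ^ (-υ)) * (dist x'' y ^ β) := by
                rw [norm_mul]
                exact mul_le_mul (hZbd x'' hx''X y hyY hxy) h2 (norm_nonneg _)
                  (mul_nonneg hc₁0 (Real.rpow_nonneg dist_nonneg _))
            _ = c₁ * dist x'' y ^ (β - υ) := by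
                rw [mul_assoc, ← Real.rpow_add hd]; ring_nf
      · have hsub2 : S₂ ⊆ ball x'' (2 * r) ∩ Y := by
          rintro y ⟨hyb, hyY⟩
          refine ⟨mem_ball.mpr ?_, hyY⟩
          have h1 : dist y x < r := mem_ball.mp hyb
          calc dist y x'' ≤ dist y x + dist x x'' := dist_triangle _ _ _
            _ < r + r := by rw [hx''d]; linarith
            _ = 2 * r := by ring
        calc ∫⁻ y in S₂, ENNReal.ofReal (c₁ * dist x'' y ^ (β - υ)) ∂ν
            ≤ ∫⁻ y in ball x'' (2 * r) ∩ Y, ENNReal.ofReal (c₁ * dist x'' y ^ (β - υ)) ∂ν :=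
              lintegral_mono_set hsub2
          _ = ∫⁻ y in ball x'' (2 * r) ∩ Y,
                ENNReal.ofReal c₁ * ENNReal.ofReal (dist x'' y ^ (β - υ)) ∂ν := by
              congr 1; funext y; rw [← ENNReal.ofReal_mul hc₁0]
          _ = ENNReal.ofReal c₁ *
                ∫⁻ y in ball x'' (2 * r) ∩ Y, ENNReal.ofReal (dist x'' y ^ (β - υ)) ∂ν :=
              lintegral_const_mul' _ _ ENNReal.ofReal_ne_top
          _ ≤ ENNReal.ofReal c₁ *
                ENNReal.ofReal ((2:ℝ) ^ υ * c * (1 - (1/2:ℝ) ^ β)⁻¹ * (2 * r) ^ β) :=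
              mul_le_mul' le_rfl (hdyadic x'' hx''X (2 * r) (by linarith) h2rδ)
          _ = ENNReal.ofReal (c₁ * (K * (2 * r) ^ β)) := by
              rw [← ENNReal.ofReal_mul hc₁0]
    -- value of Q at x''
    have hintSc3 : IntegrableOn (fun y => Z x'' y * (g x'' - g y)) (Y \ ball x r) ν := by
      rw [integrableOn_congr_fun hzero hScm]
      exact integrableOn_zero
    have hQxpp : Qop ν Y Z g x'' = ∫ y in S₂, Z x'' y * (g x'' - g y) ∂ν := by
      rw [Qop, ← hYunion, setIntegral_union hdisj hScm hP3.1 hintSc3,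
        setIntegral_congr_fun hScm hzero, integral_zero, add_zero]
    -- value of Q at x
    set I := ∫ y in Y \ ball x r, Z x y ∂ν with hIdef
    have heqSc : EqOn (fun y => Z x y * g y) (fun y => (r ^ β : ℝ) • Z x y) (Y \ ball x r) := by
      rintro y ⟨_, hy2⟩
      simp only [hgout y hy2, Complex.real_smul]
      ring
    have hintSc4 : IntegrableOn (fun y => Z x y * g y) (Y \ ball x r) ν := by
      rw [integrableOn_congr_fun heqSc hScm]
      exact ((hcompl x hx r hr).1).smul (r ^ β : ℝ)
    have hsplitQ : Qop ν Y Z g x = -((∫ y in S₂, Z x y * g y ∂ν) + (r ^ β : ℝ) • I) := by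
      rw [Qop]
      have hinteq : ∀ y, Z x y * (g x - g y) = -(Z x y * g y) := by
        intro y; rw [hgx]; ring
      simp only [hinteq]
      rw [integral_neg, ← hYunion, setIntegral_union hdisj hScm hP2.1 hintSc4]
      congr 2
      rw [setIntegral_congr_fun hScm heqSc, integral_smul, hIdef]
    -- Hölder difference bound
    have hdiff : ‖Qop ν Y Z g x - Qop ν Y Z g x''‖ ≤ C * r ^ β := by
      have hmem : ‖Qop ν Y Z g x - Qop ν Y Z g x''‖ / dist x x'' ^ β ∈
          holderSet X β (Qop ν Y Z g) := ⟨x, hx, x'', hx''X, hxx, rfl⟩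
      have h1 : ‖Qop ν Y Z g x - Qop ν Y Z g x''‖ / dist x x'' ^ β ≤
          holderSemi X β (Qop ν Y Z g) := le_csSup hQH hmem
      have hsup0 : 0 ≤ supNormOn X (Qop ν Y Z g) :=
        le_trans (norm_nonneg _) (le_csSup hQb ⟨x₀, hx₀, rfl⟩)
      have hsemile : holderSemi X β (Qop ν Y Z g) ≤ C := by
        have h2 := mul_le_mul_of_nonneg_left hgH.2 hC.le
        linarith [hQn]
      rw [hx''d] at h1
      have hrβ : 0 < r ^ β := Real.rpow_pos_of_pos hr β
      calc ‖Qop ν Y Z g x - Qop ν Y Z g x''‖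
          = ‖Qop ν Y Z g x - Qop ν Y Z g x''‖ / r ^ β * r ^ β := by field_simp
        _ ≤ C * r ^ β := mul_le_mul_of_nonneg_right (h1.trans hsemile) hrβ.le
    -- assemble
    have hQx : ‖Qop ν Y Z g x‖ ≤ C * r ^ β + c₁ * (K * (2 * r) ^ β) := by
      calc ‖Qop ν Y Z g x‖
          = ‖(Qop ν Y Z g x - Qop ν Y Z g x'') + Qop ν Y Z g x''‖ := by ring_nf
        _ ≤ ‖Qop ν Y Z g x - Qop ν Y Z g x''‖ + ‖Qop ν Y Z g x''‖ := norm_add_le _ _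
        _ ≤ C * r ^ β + c₁ * (K * (2 * r) ^ β) := by
            refine add_le_add hdiff ?_
            rw [hQxpp]; exact hP3.2
    have hrβ : 0 < r ^ β := Real.rpow_pos_of_pos hr β
    have h2rβ : (2 * r) ^ β = 2 ^ β * r ^ β := Real.mul_rpow (by norm_num) hr.le
    have hIb : r ^ β * ‖I‖ ≤ r ^ β * (C + c₁ * K + c₁ * (K * 2 ^ β)) := by
      have h1 : (r ^ β : ℝ) • I = -(Qop ν Y Z g x) - (∫ y in S₂, Z x y * g y ∂ν) := by
        rw [hsplitQ]; ring
      have h2 : ‖(r ^ β : ℝ) • I‖ = r ^ β * ‖I‖ := by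
        rw [norm_smul, Real.norm_eq_abs, abs_of_nonneg (Real.rpow_nonneg hr.le β)]
      calc r ^ β * ‖I‖ = ‖(r ^ β : ℝ) • I‖ := h2.symm
        _ = ‖-(Qop ν Y Z g x) - (∫ y in S₂, Z x y * g y ∂ν)‖ := by rw [h1]
        _ ≤ ‖-(Qop ν Y Z g x)‖ + ‖∫ y in S₂, Z x y * g y ∂ν‖ := norm_sub_le _ _
        _ = ‖Qop ν Y Z g x‖ + ‖∫ y in S₂, Z x y * g y ∂ν‖ := by rw [norm_neg]
        _ ≤ (C * r ^ β + c₁ * (K * (2 * r) ^ β)) + c₁ * (K * r ^ β) := add_le_add hQx hP2.2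
        _ = r ^ β * (C + c₁ * K + c₁ * (K * 2 ^ β)) := by rw [h2rβ]; ring
    exact le_of_mul_le_mul_left hIb hrβ
  -- conclusion
  refine ⟨max (C + c₁ * K + c₁ * (K * 2 ^ β)) (c₁ * ρ₁ ^ (-υ) * (ν Y).toReal), ?_⟩
  rintro t ⟨x, hx, r, hr, rfl⟩
  rcases lt_or_ge r ρ₁ with h | h
  · exact le_trans (hsmall x hx r hr h) (le_max_left _ _)
  · refine le_trans (le_trans (hcompl x hx r hr).2 ?_) (le_max_right _ _)
    have h1 : r ^ (-υ) ≤ ρ₁ ^ (-υ) :=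
      Real.rpow_le_rpow_of_nonpos hρ₁0 h (neg_nonpos.mpr hυ.le)
    have h2 : c₁ * r ^ (-υ) ≤ c₁ * ρ₁ ^ (-υ) := mul_le_mul_of_nonneg_left h1 hc₁0
    exact mul_le_mul_of_nonneg_right h2 ENNReal.toReal_nonneg
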